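/- arXiv:1908.07676 — 2 statements merged into one kernel-verified Lean document; each statement's English description precedes it below -/
import Mathlib

section
/- Let (X,d) be a compact metric space and f_{0,∞} = {f_n}_{n=0}^∞ a sequence of continuous self-maps of X. Then (X, f_{0,∞}) is cofinitely sensitive if and only if the induced system (𝓜(X), f̂_{0,∞}) is cofinitely sensitive. -/
open MeasureTheory Filter

/-- `nacomp f n = f_{n-1} ∘ ⋯ ∘ f_0` (with `nacomp f 0 = id`): the time-`n` map of the
non-autonomous system `(X, f_{0,∞})`. -/
def nacomp {Y : Type*} (f : ℕ → Y → Y) : ℕ → Y → Y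
  | 0 => id
  | n + 1 => f n ∘ nacomp f n

/-- The induced pushforward map `f̂` on the space `𝓜(X)` of Borel probability measures,
equipped with the Lévy–Prokhorov metric. -/
noncomputable def inducedMap {X : Type*} [MetricSpace X] [MeasurableSpace X] [BorelSpace X]
    (f : X → X) (hf : Continuous f) :
    LevyProkhorov (ProbabilityMeasure X) → LevyProkhorov (ProbabilityMeasure X) :=
  fun μ => (LevyProkhorov.toMeasureEquiv (α := ProbabilityMeasure X)).symm
    (((LevyProkhorov.toMeasureEquiv (α := ProbabilityMeasure X)) μ).map hf.measurable.aemeasurable)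

/-- The set `N(x, ε, δ)` of times `n ≥ 1` at which some point `ε`-close to `x` separates from
`x` by more than `δ` under the non-autonomous dynamics. -/
def NASensSet {Y : Type*} [PseudoMetricSpace Y] (f : ℕ → Y → Y) (x : Y) (ε δ : ℝ) : Set ℕ :=
  {n : ℕ | 1 ≤ n ∧ ∃ y : Y, dist x y < ε ∧ δ < dist (nacomp f n x) (nacomp f n y)}

/-- Cofinite sensitivity: some `δ > 0` works for every point and every `ε > 0`, with
`N(x, ε, δ)` cofinite in the positive integers. -/
def NACofinitelySensitive {Y : Type*} [PseudoMetricSpace Y] (f : ℕ → Y → Y) : Prop :=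
  ∃ δ : ℝ, 0 < δ ∧ ∀ x : Y, ∀ ε : ℝ, 0 < ε →
    {n : ℕ | 1 ≤ n ∧ n ∉ NASensSet f x ε δ}.Finite

open Metric Set ENNReal
open scoped Function

set_option linter.unusedSectionVars false

section A
variable {X : Type*} [MetricSpace X] [MeasurableSpace X] [BorelSpace X]

lemma nacomp_cont (f : ℕ → X → X) (hf : ∀ n, Continuous (f n)) :
    ∀ n, Continuous (nacomp f n)
  | 0 => continuous_id
  | n + 1 => (hf n).comp (nacomp_cont f hf n)

lemma inducedMap_toMeasure (g : X → X) (hg : Continuous g)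
    (μ : LevyProkhorov (ProbabilityMeasure X)) :
    (inducedMap g hg μ).toMeasure.toMeasure = μ.toMeasure.toMeasure.map g := by
  show (((LevyProkhorov.toMeasureEquiv (α := ProbabilityMeasure X)) μ).map
    hg.measurable.aemeasurable).toMeasure = _
  rw [ProbabilityMeasure.toMeasure_map]
  rfl

lemma nacomp_induced (f : ℕ → X → X) (hf : ∀ n, Continuous (f n)) :
    ∀ (n : ℕ) (μ : LevyProkhorov (ProbabilityMeasure X)),
      (nacomp (fun n => inducedMap (f n) (hf n)) n μ).toMeasure.toMeasure
        = μ.toMeasure.toMeasure.map (nacomp f n)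
  | 0, μ => by simp [nacomp, Measure.map_id]
  | n + 1, μ => by
    show (inducedMap (f n) (hf n) (nacomp (fun n => inducedMap (f n) (hf n)) n μ)).toMeasure.toMeasure = _
    rw [inducedMap_toMeasure, nacomp_induced f hf n μ,
      Measure.map_map (hf n).measurable (nacomp_cont f hf n).measurable]
    rfl

lemma lp_dist_lower {μ ν : Measure X} [IsProbabilityMeasure μ] [IsProbabilityMeasure ν]
    {c : ℝ} (hc : 0 ≤ c) {B : Set X} (hB : MeasurableSet B)
    (h : ν (thickening c B) + ENNReal.ofReal c < μ B) :
    c ≤ levyProkhorovDist μ ν := by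
  by_contra h'
  push_neg at h'
  have he : levyProkhorovEDist μ ν < ENNReal.ofReal c :=
    (ENNReal.lt_ofReal_iff_toReal_lt (levyProkhorovEDist_ne_top μ ν)).mpr h'
  have := left_measure_le_of_levyProkhorovEDist_lt he hB
  rw [ENNReal.toReal_ofReal hc] at this
  exact absurd this (not_le.mpr h)

lemma lp_dist_gt_exists {μ ν : Measure X} [IsProbabilityMeasure μ] [IsProbabilityMeasure ν]
    {c : ℝ} (hc : 0 ≤ c) (h : c < levyProkhorovDist μ ν) :
    ∃ B : Set X, MeasurableSet B ∧
      (ν (thickening c B) + ENNReal.ofReal c < μ B ∨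
       μ (thickening c B) + ENNReal.ofReal c < ν B) := by
  have he : ENNReal.ofReal c < levyProkhorovEDist μ ν := by
    rwa [ENNReal.ofReal_lt_iff_lt_toReal hc (levyProkhorovEDist_ne_top μ ν)]
  have hnm : ENNReal.ofReal c ∉ {ε : ℝ≥0∞ | ∀ B, MeasurableSet B →
      μ B ≤ ν (thickening ε.toReal B) + ε ∧ ν B ≤ μ (thickening ε.toReal B) + ε} := by
    intro hm
    exact absurd (sInf_le hm : levyProkhorovEDist μ ν ≤ _) (not_le.mpr he)
  simp only [Set.mem_setOf_eq] at hnm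
  push_neg at hnm
  obtain ⟨B, hB, hor⟩ := hnm
  rw [ENNReal.toReal_ofReal hc] at hor
  by_cases h1 : μ B ≤ ν (thickening c B) + ENNReal.ofReal c
  · exact ⟨B, hB, Or.inr (hor h1)⟩
  · exact ⟨B, hB, Or.inl (not_le.mp h1)⟩

end A

section D
variable {X : Type*} [MetricSpace X] [MeasurableSpace X] [BorelSpace X]
variable {ι : Type*} [Countable ι]

noncomputable def nuMeas (μm : Measure X) (piece : ι → Set X) (atom : ι → X) (P : Set X) :
    Measure X :=
  μm.restrict Pᶜ + Measure.sum (fun p => μm (piece p ∩ P) • Measure.dirac (atom p))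

lemma nuMeas_apply (μm : Measure X) (piece : ι → Set X) (atom : ι → X) (P : Set X)
    {B : Set X} (hB : MeasurableSet B) :
    nuMeas μm piece atom P B
      = μm (B ∩ Pᶜ) + ∑' p, μm (piece p ∩ P) * B.indicator 1 (atom p) := by
  simp only [nuMeas, Measure.add_apply, Measure.restrict_apply hB,
    Measure.sum_apply _ hB, Measure.smul_apply, Measure.dirac_apply' _ hB, smul_eq_mul]

lemma nuMeas_prob (μm : Measure X) [IsProbabilityMeasure μm]
    (piece : ι → Set X) (atom : ι → X) {P : Set X}
    (hpm : ∀ p, MeasurableSet (piece p)) (hpd : Pairwise (Disjoint on piece))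
    (hpc : (⋃ p, piece p) = univ) (hP : MeasurableSet P) :
    IsProbabilityMeasure (nuMeas μm piece atom P) := by
  constructor
  rw [nuMeas_apply μm piece atom P MeasurableSet.univ]
  have h1 : ∀ p, μm (piece p ∩ P) * (univ : Set X).indicator (1 : X → ℝ≥0∞) (atom p)
      = μm (piece p ∩ P) := by
    intro p; simp
  simp_rw [h1]
  have h2 : ∑' p, μm (piece p ∩ P) = μm (⋃ p, piece p ∩ P) := by
    rw [measure_iUnion ?_ fun p => (hpm p).inter hP]
    intro p q hpq
    exact ((hpd hpq).mono (inter_subset_left) (inter_subset_left))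
  have : μm P ≤ 1 := prob_le_one
  rw [h2, ← iUnion_inter, hpc, univ_inter, univ_inter,
    measure_compl hP (measure_ne_top _ _), measure_univ, tsub_add_cancel_of_le this]

lemma nuMeas_le (μm : Measure X) (piece : ι → Set X) (atom : ι → X) {P : Set X}
    (hpm : ∀ p, MeasurableSet (piece p)) (hpd : Pairwise (Disjoint on piece))
    (hP : MeasurableSet P)
    {ε' : ℝ} (hε' : 0 < ε') (hmove : ∀ p x, x ∈ piece p → dist x (atom p) < ε')
    {B : Set X} (hB : MeasurableSet B) :
    nuMeas μm piece atom P B ≤ μm (thickening ε' B) := by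
  classical
  rw [nuMeas_apply μm piece atom P hB]
  set S : ι → Set X := fun p => if atom p ∈ B then piece p ∩ P else ∅ with hS
  have hterm : ∀ p, μm (piece p ∩ P) * B.indicator 1 (atom p) = μm (S p) := by
    intro p
    by_cases hab : atom p ∈ B
    · simp [hS, hab]
    · simp [hS, hab]
  simp_rw [hterm]
  have hSm : ∀ p, MeasurableSet (S p) := by
    intro p
    by_cases hab : atom p ∈ B <;> simp [hS, hab, (hpm p).inter hP]
  have hSd : Pairwise (Disjoint on S) := by
    intro p q hpq
    have : S p ⊆ piece p ∧ S q ⊆ piece q := by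
      constructor <;> (simp only [hS]; split_ifs <;>
        simp [inter_subset_left, empty_subset])
    exact (hpd hpq).mono this.1 this.2
  have hsum : ∑' p, μm (S p) = μm (⋃ p, S p) := (measure_iUnion hSd hSm).symm
  rw [hsum]
  have hdisj2 : Disjoint (B ∩ Pᶜ) (⋃ p, S p) := by
    refine Set.disjoint_left.mpr fun x hx hmem => ?_
    obtain ⟨p, hp⟩ := mem_iUnion.mp hmem
    have : x ∈ P := by
      by_cases hab : atom p ∈ B
      · simp only [hS, if_pos hab] at hp; exact hp.2
      · simp [hS, if_neg hab] at hp
    exact hx.2 this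
  rw [← measure_union hdisj2 (MeasurableSet.iUnion hSm)]
  apply measure_mono
  intro x hx
  rcases hx with hx | hx
  · exact self_subset_thickening hε' B hx.1
  · obtain ⟨p, hp⟩ := mem_iUnion.mp hx
    by_cases hab : atom p ∈ B
    · simp only [hS, if_pos hab] at hp
      exact mem_thickening_iff.mpr ⟨atom p, hab, hmove p x hp.1⟩
    · simp [hS, if_neg hab] at hp

lemma nuMeas_far (μm : Measure X) (piece : ι → Set X) (atom : ι → X)
    {A : Set X} (hA : MeasurableSet A) {r : ℝ}
    {F : X → X} (hF : Measurable F)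
    (hfar : ∀ p, (piece p ∩ F ⁻¹' A).Nonempty → F (atom p) ∉ thickening r A) :
    nuMeas μm piece atom (F ⁻¹' A) (F ⁻¹' (thickening r A))
      ≤ μm (F ⁻¹' (thickening r A \ A)) := by
  have hTm : MeasurableSet (F ⁻¹' (thickening r A)) := hF isOpen_thickening.measurableSet
  rw [nuMeas_apply μm piece atom _ hTm]
  have hterm : ∀ p, μm (piece p ∩ F ⁻¹' A)
      * (F ⁻¹' (thickening r A)).indicator (1 : X → ℝ≥0∞) (atom p) = 0 := by
    intro p
    by_cases hz : μm (piece p ∩ F ⁻¹' A) = 0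
    · rw [hz, zero_mul]
    · have hne : (piece p ∩ F ⁻¹' A).Nonempty := nonempty_of_measure_ne_zero hz
      have : atom p ∉ F ⁻¹' (thickening r A) := fun hc => (hfar p hne) hc
      rw [Set.indicator_of_notMem this, mul_zero]
  simp_rw [hterm, tsum_zero, add_zero]
  apply le_of_eq
  rfl

end D

set_option linter.unusedSectionVars false

section E
variable {X : Type*} [MetricSpace X] [MeasurableSpace X] [BorelSpace X]

lemma exists_fin_net [CompactSpace X] [Nonempty X] {ρ : ℝ} (hρ : 0 < ρ) :
    ∃ (M : ℕ) (c : Fin M → X), 0 < M ∧ (univ : Set X) ⊆ ⋃ i, ball (c i) ρ := by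
  obtain ⟨t, -, htf, hcov⟩ := finite_cover_balls_of_compact (isCompact_univ : IsCompact (Set.univ : Set X)) hρ
  haveI := htf.fintype
  set s : Finset X := htf.toFinset with hs
  refine ⟨s.card, fun i => (s.equivFin.symm i : X), ?_, ?_⟩
  · rw [Finset.card_pos]
    obtain ⟨x⟩ := ‹Nonempty X›
    obtain ⟨y, hy, -⟩ := mem_iUnion₂.mp (hcov (mem_univ x))
    exact ⟨y, htf.mem_toFinset.mpr hy⟩
  · intro x hx
    obtain ⟨y, hy, hxy⟩ := mem_iUnion₂.mp (hcov (mem_univ x))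
    have hys : y ∈ s := htf.mem_toFinset.mpr hy
    refine mem_iUnion.mpr ⟨s.equivFin ⟨y, hys⟩, ?_⟩
    show x ∈ ball ((s.equivFin.symm (s.equivFin ⟨y, hys⟩)) : X) ρ
    rw [Equiv.symm_apply_apply]
    exact hxy

lemma exists_partition [CompactSpace X] [Nonempty X] {ρ : ℝ} (hρ : 0 < ρ) :
    ∃ (k : ℕ) (z : ℕ → X) (E : ℕ → Set X), 0 < k ∧ (∀ i, MeasurableSet (E i)) ∧
      Pairwise (Disjoint on E) ∧ (⋃ i, E i) = univ ∧
      (∀ i x, x ∈ E i → dist x (z i) < ρ) ∧ (∀ i, z i = z (i % k)) := by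
  obtain ⟨M, c, hM, hcov⟩ := exists_fin_net (X := X) hρ
  set z : ℕ → X := fun i => c ⟨i % M, Nat.mod_lt i hM⟩ with hz
  set E : ℕ → Set X := fun i => ball (z i) ρ \ ⋃ j ∈ Finset.range i, ball (z j) ρ with hE
  have hEsub : ∀ i, E i ⊆ ball (z i) ρ := fun i => diff_subset
  refine ⟨M, z, E, hM, ?_, ?_, ?_, ?_, ?_⟩
  · intro i
    exact measurableSet_ball.diff (Finset.measurableSet_biUnion _ fun j _ => measurableSet_ball)
  · intro i j hij
    rcases Nat.lt_or_ge i j with hlt | hge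
    · refine Set.disjoint_left.mpr fun x hxi hxj => ?_
      exact hxj.2 (mem_biUnion (Finset.mem_range.mpr hlt) (hEsub i hxi))
    · have hlt : j < i := lt_of_le_of_ne hge (Ne.symm hij)
      refine Set.disjoint_left.mpr fun x hxi hxj => ?_
      exact hxi.2 (mem_biUnion (Finset.mem_range.mpr hlt) (hEsub j hxj))
  · classical
    apply Set.eq_univ_of_forall
    intro x
    have hex : ∃ m, x ∈ ball (z m) ρ := by
      obtain ⟨i, hi⟩ := mem_iUnion.mp (hcov (mem_univ x))
      refine ⟨i.val, ?_⟩
      have : z i.val = c i := by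
        simp only [hz]
        congr 1
        exact Fin.ext (Nat.mod_eq_of_lt i.isLt)
      rwa [this]
    refine mem_iUnion.mpr ⟨Nat.find hex, Nat.find_spec hex, ?_⟩
    intro hmem
    obtain ⟨j, hj⟩ := mem_iUnion.mp hmem
    obtain ⟨hjr, hjx⟩ := mem_iUnion.mp hj
    exact Nat.find_min hex (Finset.mem_range.mp hjr) hjx
  · intro i x hx
    exact mem_ball.mp (hEsub i hx)
  · intro i
    simp only [hz]
    congr 1
    exact Fin.ext (Nat.mod_mod_of_dvd i (dvd_refl M)).symm

lemma pigeon_cover {M : ℕ} (hM : 0 < M) (c : Fin M → X) {ρ : ℝ}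
    (hcov : (univ : Set X) ⊆ ⋃ i, ball (c i) ρ) (μ : Measure X) [IsProbabilityMeasure μ] :
    ∃ i, ENNReal.ofReal (1 / M) ≤ μ (ball (c i) ρ) := by
  by_contra h
  push_neg at h
  have hreal : ∀ i, (μ (ball (c i) ρ)).toReal < 1 / M := fun i =>
    (ENNReal.lt_ofReal_iff_toReal_lt (measure_ne_top _ _)).mp (h i)
  have h1 : (1 : ℝ≥0∞) ≤ ∑ i : Fin M, μ (ball (c i) ρ) := by
    calc (1 : ℝ≥0∞) = μ univ := measure_univ.symm
      _ ≤ μ (⋃ i, ball (c i) ρ) := measure_mono hcov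
      _ ≤ ∑' i, μ (ball (c i) ρ) := measure_iUnion_le _
      _ = ∑ i : Fin M, μ (ball (c i) ρ) := tsum_fintype _
  have hne : (∑ i : Fin M, μ (ball (c i) ρ)) ≠ ⊤ :=
    (ENNReal.sum_lt_top.mpr fun i _ => measure_lt_top _ _).ne
  have h2 : (1 : ℝ) ≤ ∑ i : Fin M, (μ (ball (c i) ρ)).toReal := by
    have := ENNReal.toReal_mono hne h1
    rwa [ENNReal.toReal_one, ENNReal.toReal_sum (fun i _ => measure_ne_top _ _)] at this
  have h3 : ∑ i : Fin M, (μ (ball (c i) ρ)).toReal < ∑ _i : Fin M, (1 / M : ℝ) := by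
    haveI : Nonempty (Fin M) := Fin.pos_iff_nonempty.mp hM
    exact Finset.sum_lt_sum_of_nonempty Finset.univ_nonempty fun i _ => hreal i
  rw [Finset.sum_const, Finset.card_univ, Fintype.card_fin, nsmul_eq_mul] at h3
  have hM' : (0:ℝ) < M := Nat.cast_pos.mpr hM
  rw [mul_one_div, div_self hM'.ne'] at h3
  linarith

lemma pigeon_annulus {m : ℕ} (hm : 0 < m) (t : ℕ → Set X)
    (ht : ∀ j, MeasurableSet (t j)) (hdis : (↑(Finset.range m) : Set ℕ).PairwiseDisjoint t)
    (μ : Measure X) [IsProbabilityMeasure μ] :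
    ∃ j ∈ Finset.range m, μ (t j) ≤ ENNReal.ofReal (1 / m) := by
  by_contra h
  push_neg at h
  have hreal : ∀ j ∈ Finset.range m, (1 / m : ℝ) < (μ (t j)).toReal := fun j hj =>
    (ENNReal.ofReal_lt_iff_lt_toReal (by positivity) (measure_ne_top _ _)).mp (h j hj)
  have hsum : (∑ j ∈ Finset.range m, μ (t j)) ≤ 1 := by
    rw [← measure_biUnion_finset hdis fun j _ => ht j]
    exact prob_le_one
  have hne : (∑ j ∈ Finset.range m, μ (t j)) ≠ ⊤ :=
    (ENNReal.sum_lt_top.mpr fun j _ => measure_lt_top _ _).ne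
  have h2 : ∑ j ∈ Finset.range m, (μ (t j)).toReal ≤ 1 := by
    have := ENNReal.toReal_mono (by simp) hsum
    rwa [ENNReal.toReal_one, ENNReal.toReal_sum (fun j _ => measure_ne_top _ _)] at this
  have h3 : ∑ _j ∈ Finset.range m, (1 / m : ℝ) < ∑ j ∈ Finset.range m, (μ (t j)).toReal :=
    Finset.sum_lt_sum_of_nonempty (Finset.nonempty_range_iff.mpr hm.ne') hreal
  rw [Finset.sum_const, Finset.card_range, nsmul_eq_mul] at h3
  have hm' : (0:ℝ) < m := Nat.cast_pos.mpr hm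
  rw [mul_one_div, div_self hm'.ne'] at h3
  linarith

end E

section C
variable {X : Type*} [MetricSpace X] [MeasurableSpace X] [BorelSpace X]

lemma backward_dir (f : ℕ → X → X) (hf : ∀ n, Continuous (f n))
    (h : NACofinitelySensitive (fun n => inducedMap (f n) (hf n))) :
    NACofinitelySensitive f := by
  obtain ⟨δ, hδ, H⟩ := h
  refine ⟨δ / 2, by positivity, fun x ε hε => ?_⟩
  set ε₀ : ℝ := min ε δ / 2 with hε₀def
  have hε₀ : 0 < ε₀ := by positivity
  set lpd : LevyProkhorov (ProbabilityMeasure X) :=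
    (LevyProkhorov.toMeasureEquiv (α := ProbabilityMeasure X)).symm ⟨Measure.dirac x, inferInstance⟩ with hlpd
  refine (H lpd ε₀ hε₀).subset ?_
  intro n hn
  refine ⟨hn.1, fun hmem => hn.2 ?_⟩
  obtain ⟨hn1, ν, hclose, hfar⟩ := hmem
  haveI hνP : IsProbabilityMeasure (ν.toMeasure.toMeasure : Measure X) :=
    ((LevyProkhorov.toMeasureEquiv (α := ProbabilityMeasure X)) ν).prop
  set F : X → X := nacomp f n with hF
  have hFc : Continuous F := nacomp_cont f hf n
  set z : X := F x with hz
  -- dist facts translated to levyProkhorovDist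
  have hlpdm : (lpd.toMeasure.toMeasure : Measure X) = Measure.dirac x := rfl
  have hclose' : levyProkhorovDist (Measure.dirac x) ν.toMeasure.toMeasure < ε₀ := by
    have := hclose
    rw [LevyProkhorov.dist_probabilityMeasure_def, hlpdm] at this
    exact this
  have hfar' : δ < levyProkhorovDist (Measure.dirac z) (ν.toMeasure.toMeasure.map F) := by
    have := hfar
    rw [LevyProkhorov.dist_probabilityMeasure_def, nacomp_induced f hf n lpd, nacomp_induced f hf n ν, hlpdm,
      Measure.map_dirac' hFc.measurable] at this
    exact this
  -- Step 1 : mass near x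
  have step1 : 1 ≤ ν.toMeasure.toMeasure (ball x ε₀) + ENNReal.ofReal ε₀ := by
    have he : levyProkhorovEDist (Measure.dirac x) ν.toMeasure.toMeasure < ENNReal.ofReal ε₀ :=
      (ENNReal.lt_ofReal_iff_toReal_lt (levyProkhorovEDist_ne_top _ _)).mpr hclose'
    have := left_measure_le_of_levyProkhorovEDist_lt he (measurableSet_singleton x)
    rw [ENNReal.toReal_ofReal hε₀.le, thickening_singleton,
      Measure.dirac_apply_of_mem (Set.mem_singleton x)] at this
    exact this
  -- Step 2 : mass far from z at time n
  haveI : IsProbabilityMeasure (ν.toMeasure.toMeasure.map F) :=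
    Measure.isProbabilityMeasure_map hFc.measurable.aemeasurable
  have step2 : ENNReal.ofReal δ < (ν.toMeasure.toMeasure.map F) ((ball z δ)ᶜ) := by
    obtain ⟨B, hB, hor⟩ := lp_dist_gt_exists hδ.le hfar'
    rcases hor with h1 | h1
    · -- dirac z B is large
      have hzB : z ∈ B := by
        by_contra hzB
        rw [Measure.dirac_apply' z hB, Set.indicator_of_notMem hzB] at h1
        simp at h1
      have hone : Measure.dirac z B ≤ 1 := prob_le_one
      have hball : (ν.toMeasure.toMeasure.map F) (ball z δ) + ENNReal.ofReal δ < 1 :=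
        lt_of_le_of_lt (add_le_add_left (measure_mono (ball_subset_thickening hzB δ)) _)
          (lt_of_lt_of_le h1 hone)
      have hcompl : (ν.toMeasure.toMeasure.map F) ((ball z δ)ᶜ)
          = 1 - (ν.toMeasure.toMeasure.map F) (ball z δ) :=
        prob_compl_eq_one_sub measurableSet_ball
      rw [hcompl]
      rw [lt_tsub_iff_right]
      rwa [add_comm] at hball
    · -- ν-mass of B itself is large, B misses ball z δ
      have hzT : z ∉ thickening δ B := by
        intro hzT
        have : (1 : ℝ≥0∞) + ENNReal.ofReal δ < 1 := by
          calc (1:ℝ≥0∞) + ENNReal.ofReal δ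
              = Measure.dirac z (thickening δ B) + ENNReal.ofReal δ := by
                rw [Measure.dirac_apply_of_mem hzT]
            _ < ν.toMeasure.toMeasure.map F B := h1
            _ ≤ 1 := prob_le_one
        exact absurd this (by simp [ENNReal.ofReal_pos.mpr hδ, le_add_right])
      have hBsub : B ⊆ (ball z δ)ᶜ := by
        intro y hy hyball
        exact hzT (mem_thickening_iff.mpr ⟨y, hy, by rwa [mem_ball, dist_comm] at hyball⟩)
      calc ENNReal.ofReal δ ≤ Measure.dirac z (thickening δ B) + ENNReal.ofReal δ := le_add_self
        _ < ν.toMeasure.toMeasure.map F B := h1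
        _ ≤ (ν.toMeasure.toMeasure.map F) ((ball z δ)ᶜ) := measure_mono hBsub
  -- Step 3 : intersect
  have hT2m : MeasurableSet (F ⁻¹' (ball z δ)ᶜ) :=
    hFc.measurable measurableSet_ball.compl
  have step2' : ENNReal.ofReal δ < ν.toMeasure.toMeasure (F ⁻¹' (ball z δ)ᶜ) := by
    rwa [Measure.map_apply hFc.measurable measurableSet_ball.compl] at step2
  have hnonempty : (ball x ε₀ ∩ F ⁻¹' (ball z δ)ᶜ).Nonempty := by
    by_contra hne
    rw [Set.not_nonempty_iff_eq_empty] at hne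
    have hdisj : Disjoint (ball x ε₀) (F ⁻¹' (ball z δ)ᶜ) :=
      Set.disjoint_iff_inter_eq_empty.mpr hne
    have hunion := measure_union (μ := ν.toMeasure.toMeasure) hdisj hT2m
    have hlt : ENNReal.ofReal ε₀ < ν.toMeasure.toMeasure (F ⁻¹' (ball z δ)ᶜ) := by
      refine lt_of_le_of_lt ?_ step2'
      apply ENNReal.ofReal_le_ofReal
      calc ε₀ ≤ δ / 2 := by rw [hε₀def]; gcongr; exact min_le_right _ _
        _ ≤ δ := by linarith
    have : (1:ℝ≥0∞) < 1 := by
      calc (1:ℝ≥0∞) ≤ ν.toMeasure.toMeasure (ball x ε₀) + ENNReal.ofReal ε₀ := step1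
        _ < ν.toMeasure.toMeasure (ball x ε₀) + ν.toMeasure.toMeasure (F ⁻¹' (ball z δ)ᶜ) :=
            ENNReal.add_lt_add_left (measure_ne_top _ _) hlt
        _ = ν.toMeasure.toMeasure (ball x ε₀ ∪ F ⁻¹' (ball z δ)ᶜ) := hunion.symm
        _ ≤ 1 := prob_le_one
    exact absurd this (lt_irrefl _)
  obtain ⟨y, hy1, hy2⟩ := hnonempty
  refine ⟨hn1, y, ?_, ?_⟩
  · rw [mem_ball, dist_comm] at hy1
    calc dist x y < ε₀ := hy1
      _ ≤ ε / 2 := by rw [hε₀def]; gcongr; exact min_le_left _ _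
      _ < ε := by linarith
  · have : ¬ dist (F y) z < δ := hy2
    rw [dist_comm] at this
    push_neg at this
    calc δ / 2 < δ := by linarith
      _ ≤ dist z (F y) := this

end C

section G
variable {X : Type*} [MetricSpace X] [MeasurableSpace X] [BorelSpace X]

lemma forward_dir [CompactSpace X] [Nonempty X] (f : ℕ → X → X) (hf : ∀ n, Continuous (f n))
    (h : NACofinitelySensitive f) :
    NACofinitelySensitive (fun n => inducedMap (f n) (hf n)) := by
  classical
  obtain ⟨δ, hδ, H⟩ := h
  obtain ⟨M, c, hM, hcov⟩ := exists_fin_net (X := X) (show (0:ℝ) < δ/16 by positivity)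
  have hMr : (0:ℝ) < M := Nat.cast_pos.mpr hM
  set r : ℝ := δ / (64 * M) with hrdef
  have hr : 0 < r := by positivity
  set δ'' : ℝ := min r (1 / (4 * M)) with hδ''def
  have hδ''pos : 0 < δ'' := lt_min hr (by positivity)
  refine ⟨δ'' / 2, by positivity, fun μ ε hε => ?_⟩
  set ε' : ℝ := ε / 2 with hε'def
  have hε'pos : 0 < ε' := by positivity
  obtain ⟨k, z, E, hk, hEm, hEdis, hEcov, hEdist, hzper⟩ :=
    exists_partition (X := X) (show (0:ℝ) < ε'/2 by positivity)
  have hbad : (⋃ i ∈ Finset.range k,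
      {n : ℕ | 1 ≤ n ∧ n ∉ NASensSet f (z i) (ε'/2) δ}).Finite :=
    Set.Finite.biUnion (Finset.range k).finite_toSet fun i _ => H (z i) (ε'/2) (by positivity)
  refine hbad.subset ?_
  intro n hn
  by_contra hnb
  have hgood : ∀ i : ℕ, n ∈ NASensSet f (z i) (ε'/2) δ := by
    intro i
    have h1 : n ∈ NASensSet f (z (i % k)) (ε'/2) δ := by
      by_contra hc
      exact hnb (mem_iUnion₂.mpr ⟨i % k, Finset.mem_range.mpr (Nat.mod_lt i hk), hn.1, hc⟩)
    rwa [← hzper i] at h1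
  apply hn.2
  -- setup
  set F : X → X := nacomp f n with hFdef
  have hFc : Continuous F := nacomp_cont f hf n
  have hFm : Measurable F := hFc.measurable
  haveI hμmP : IsProbabilityMeasure (μ.toMeasure.toMeasure : Measure X) :=
    ((LevyProkhorov.toMeasureEquiv (α := ProbabilityMeasure X)) μ).prop
  set μ2 : Measure X := μ.toMeasure.toMeasure.map F with hμ2def
  haveI : IsProbabilityMeasure μ2 := Measure.isProbabilityMeasure_map hFm.aemeasurable
  -- companions
  have hcomp : ∀ i : ℕ, ∃ y : X, dist (z i) y < ε'/2 ∧ δ < dist (F (z i)) (F y) := by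
    intro i
    obtain ⟨-, y, hy1, hy2⟩ := hgood i
    exact ⟨y, hy1, hy2⟩
  choose w hw1 hw2 using hcomp
  -- center with big mass
  obtain ⟨i₀, hi₀⟩ := pigeon_cover hM c hcov μ2
  -- thin annulus
  set Ann : ℕ → Set X := fun j =>
    ball (c i₀) (δ/16 + (j+1) * r) \ ball (c i₀) (δ/16 + j * r) with hAnn
  have hAnnm : ∀ j, MeasurableSet (Ann j) := fun j =>
    measurableSet_ball.diff measurableSet_ball
  have hAnnkey : ∀ a b : ℕ, a < b → ∀ x, x ∈ Ann a → x ∉ Ann b := by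
    intro a b hab x hxa hxb
    apply hxb.2
    refine mem_ball.mpr (lt_of_lt_of_le (mem_ball.mp hxa.1) ?_)
    have hcast : ((a:ℝ) + 1) ≤ (b:ℝ) := by exact_mod_cast hab
    have := mul_le_mul_of_nonneg_right hcast hr.le
    linarith
  have hAnndis : (↑(Finset.range (2*M)) : Set ℕ).PairwiseDisjoint Ann := by
    intro a _ b _ hab
    rcases Nat.lt_or_ge a b with hlt | hge
    · exact Set.disjoint_left.mpr fun x hxa hxb => hAnnkey a b hlt x hxa hxb
    · have hlt : b < a := lt_of_le_of_ne hge (Ne.symm hab)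
      exact Set.disjoint_right.mpr fun x hxb hxa => hAnnkey b a hlt x hxb hxa
  obtain ⟨j, hjr, hj⟩ := pigeon_annulus (by omega) Ann hAnnm hAnndis μ2
  have hjlt : j < 2*M := Finset.mem_range.mp hjr
  have hj' : μ2 (Ann j) ≤ ENNReal.ofReal (1/(2*(M:ℝ))) := by
    have hcast : ((2*M : ℕ) : ℝ) = 2*(M:ℝ) := by push_cast; ring
    rwa [hcast] at hj
  have hsr : (δ/16 + (j:ℝ) * r) + r ≤ 3*δ/32 := by
    have hcast : ((j:ℝ) + 1) ≤ 2*(M:ℝ) := by exact_mod_cast hjlt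
    have h2 := mul_le_mul_of_nonneg_right hcast hr.le
    have h3 : 2*(M:ℝ)*r = δ/32 := by
      rw [hrdef]; field_simp; ring
    nlinarith
  set A : Set X := ball (c i₀) (δ/16 + j * r) with hAdef
  have hs16 : δ/16 ≤ δ/16 + (j:ℝ) * r := le_add_of_nonneg_right (by positivity)
  set P : Set X := F ⁻¹' A with hPdef
  have hPm : MeasurableSet P := hFm measurableSet_ball
  -- pieces
  set piece : ℕ × Bool → Set X := fun p =>
    cond p.2 (E p.1 ∩ {x | δ/2 < dist (F x) (F (w p.1))})
      (E p.1 ∩ {x | dist (F x) (F (w p.1)) ≤ δ/2}) with hpiecedef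
  set atom : ℕ × Bool → X := fun p => cond p.2 (w p.1) (z p.1) with hatomdef
  have hpsub : ∀ p, piece p ⊆ E p.1 := by
    rintro ⟨i, b⟩; cases b <;> exact inter_subset_left
  have hpm : ∀ p, MeasurableSet (piece p) := by
    rintro ⟨i, b⟩
    have hc1 : Continuous fun x => dist (F x) (F (w i)) := hFc.dist continuous_const
    cases b
    · exact (hEm i).inter (isClosed_le hc1 continuous_const).measurableSet
    · exact (hEm i).inter (isOpen_lt continuous_const hc1).measurableSet
  have hpd : Pairwise (Disjoint on piece) := by
    rintro ⟨i, b⟩ ⟨i', b'⟩ hne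
    by_cases hii : i = i'
    · subst hii
      have hbb : b ≠ b' := fun hb => hne (by rw [hb])
      refine Set.disjoint_left.mpr fun x hx hx' => ?_
      cases b <;> cases b'
      · exact hbb rfl
      · exact absurd (show δ/2 < dist (F x) (F (w i)) from hx'.2) (not_lt.mpr hx.2)
      · exact absurd (show δ/2 < dist (F x) (F (w i)) from hx.2) (not_lt.mpr hx'.2)
      · exact hbb rfl
    · exact (hEdis hii).mono (hpsub ⟨i, b⟩) (hpsub ⟨i', b'⟩)
  have hpc : (⋃ p, piece p) = univ := by
    apply eq_univ_of_forall
    intro x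
    obtain ⟨i, hi⟩ := mem_iUnion.mp (hEcov ▸ mem_univ x)
    rcases le_or_gt (dist (F x) (F (w i))) (δ/2) with hle | hlt
    · exact mem_iUnion.mpr ⟨(i, false), hi, hle⟩
    · exact mem_iUnion.mpr ⟨(i, true), hi, hlt⟩
  have hmove : ∀ p, ∀ x ∈ piece p, dist x (atom p) < ε' := by
    rintro ⟨i, b⟩ x hx
    cases b
    · have := hEdist i x hx.1
      show dist x (z i) < ε'
      linarith
    · show dist x (w i) < ε'
      calc dist x (w i) ≤ dist x (z i) + dist (z i) (w i) := dist_triangle _ _ _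
        _ < ε'/2 + ε'/2 := add_lt_add (hEdist i x hx.1) (hw1 i)
        _ = ε' := by ring
  have hsep : ∀ p, ∀ x ∈ piece p, δ/2 < dist (F x) (F (atom p)) := by
    rintro ⟨i, b⟩ x hx
    cases b
    · show δ/2 < dist (F x) (F (z i))
      have h1 := hw2 i
      have h2 : dist (F x) (F (w i)) ≤ δ/2 := hx.2
      have h3 := dist_triangle (F (z i)) (F x) (F (w i))
      rw [dist_comm]
      linarith
    · exact hx.2
  have hfar : ∀ p, (piece p ∩ P).Nonempty → F (atom p) ∉ thickening r A := by
    rintro p ⟨x, hx1, hx2⟩ hmem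
    obtain ⟨a, haA, hda⟩ := mem_thickening_iff.mp hmem
    have haC : dist a (c i₀) < δ/16 + j * r := mem_ball.mp haA
    have hxC : dist (F x) (c i₀) < δ/16 + j * r := mem_ball.mp hx2
    have h1 : δ/2 < dist (F x) (F (atom p)) := hsep p x hx1
    have h2 := dist_triangle (F (atom p)) a (c i₀)
    have h3 := dist_triangle (F x) (c i₀) (F (atom p))
    have h4 : dist (F (atom p)) (c i₀) = dist (c i₀) (F (atom p)) := dist_comm _ _
    linarith
  -- the perturbed measure
  set ν : Measure X := nuMeas μ.toMeasure.toMeasure piece atom P with hνdef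
  haveI hνP : IsProbabilityMeasure ν := nuMeas_prob μ.toMeasure.toMeasure piece atom hpm hpd hpc hPm
  haveI : IsProbabilityMeasure (ν.map F) := Measure.isProbabilityMeasure_map hFm.aemeasurable
  set lp : LevyProkhorov (ProbabilityMeasure X) :=
    (LevyProkhorov.toMeasureEquiv (α := ProbabilityMeasure X)).symm ⟨ν, hνP⟩ with hlpdef
  have hlpm : (lp.toMeasure.toMeasure : Measure X) = ν := rfl
  refine ⟨hn.1, lp, ?_, ?_⟩
  · -- closeness
    have hle : levyProkhorovDist ν μ.toMeasure.toMeasure ≤ ε' := by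
      apply levyProkhorovDist_le_of_forall_le ν μ.toMeasure.toMeasure hε'pos.le
      intro ε₂ B hε₂ hB
      calc ν B ≤ μ.toMeasure.toMeasure (thickening ε' B) :=
            nuMeas_le μ.toMeasure.toMeasure piece atom hpm hpd hPm hε'pos hmove hB
        _ ≤ μ.toMeasure.toMeasure (thickening ε₂ B) := measure_mono (thickening_mono hε₂.le B)
        _ ≤ μ.toMeasure.toMeasure (thickening ε₂ B) + ENNReal.ofReal ε₂ := le_add_right le_rfl
    have : dist μ lp = levyProkhorovDist μ.toMeasure.toMeasure ν := by
      rw [LevyProkhorov.dist_probabilityMeasure_def, hlpm]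
    rw [this, levyProkhorovDist_comm]
    calc levyProkhorovDist ν μ.toMeasure.toMeasure ≤ ε' := hle
      _ < ε := by rw [hε'def]; linarith
  · -- separation at time n
    have hkey : (ν.map F) (thickening δ'' A) + ENNReal.ofReal δ'' < μ2 A := by
      have hδ''r : δ'' ≤ r := min_le_left _ _
      have hthick : thickening r A \ A ⊆ Ann j := by
        rintro x ⟨hx1, hx2⟩
        obtain ⟨a, haA, hda⟩ := mem_thickening_iff.mp hx1
        refine ⟨mem_ball.mpr ?_, hx2⟩
        have haC : dist a (c i₀) < δ/16 + j * r := mem_ball.mp haA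
        have h2 := dist_triangle x a (c i₀)
        push_cast
        linarith
      calc (ν.map F) (thickening δ'' A) + ENNReal.ofReal δ''
          ≤ ν (F ⁻¹' (thickening r A)) + ENNReal.ofReal δ'' := by
            rw [Measure.map_apply hFm isOpen_thickening.measurableSet]
            exact add_le_add_left
              (measure_mono (preimage_mono (thickening_mono hδ''r A))) _
        _ ≤ μ.toMeasure.toMeasure (F ⁻¹' (thickening r A \ A)) + ENNReal.ofReal δ'' :=
            add_le_add_left (nuMeas_far μ.toMeasure.toMeasure piece atom measurableSet_ball hFm hfar) _
        _ = μ2 (thickening r A \ A) + ENNReal.ofReal δ'' := by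
            rw [hμ2def, Measure.map_apply hFm
              (isOpen_thickening.measurableSet.diff measurableSet_ball)]
        _ ≤ μ2 (Ann j) + ENNReal.ofReal δ'' := add_le_add_left (measure_mono hthick) _
        _ ≤ ENNReal.ofReal (1/(2*(M:ℝ))) + ENNReal.ofReal δ'' := add_le_add_left hj' _
        _ = ENNReal.ofReal (1/(2*(M:ℝ)) + δ'') :=
            (ENNReal.ofReal_add (by positivity) hδ''pos.le).symm
        _ < ENNReal.ofReal (1/(M:ℝ)) := by
            rw [ENNReal.ofReal_lt_ofReal_iff (by positivity)]
            have hd4 : δ'' ≤ 1/(4*(M:ℝ)) := min_le_right _ _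
            have e1 : (1:ℝ)/(2*(M:ℝ)) = (1/(M:ℝ))/2 := by ring
            have e2 : (1:ℝ)/(4*(M:ℝ)) = (1/(M:ℝ))/4 := by ring
            have e3 : (0:ℝ) < 1/(M:ℝ) := by positivity
            linarith
        _ ≤ μ2 (ball (c i₀) (δ/16)) := hi₀
        _ ≤ μ2 A := measure_mono (ball_subset_ball hs16)
    have hfar2 : δ'' ≤ levyProkhorovDist μ2 (ν.map F) :=
      lp_dist_lower hδ''pos.le measurableSet_ball hkey
    have hdisteq : dist (nacomp (fun n => inducedMap (f n) (hf n)) n μ)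
        (nacomp (fun n => inducedMap (f n) (hf n)) n lp)
        = levyProkhorovDist μ2 (ν.map F) := by
      rw [LevyProkhorov.dist_probabilityMeasure_def, nacomp_induced f hf n μ, nacomp_induced f hf n lp, hlpm]
    rw [hdisteq]
    linarith

end G

/-- `(X, f_{0,∞})` is cofinitely sensitive iff the induced system `(𝓜(X), f̂_{0,∞})` is
cofinitely sensitive. -/
theorem cofinitelySensitive_iff_induced
    {X : Type*} [MetricSpace X] [CompactSpace X] [MeasurableSpace X] [BorelSpace X]
    (f : ℕ → X → X) (hf : ∀ n, Continuous (f n)) :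
    NACofinitelySensitive f ↔ NACofinitelySensitive (fun n => inducedMap (f n) (hf n)) := by
  constructor
  · intro h
    rcases isEmpty_or_nonempty X with hX | hX
    · refine ⟨1, one_pos, fun μ ε hε => ?_⟩
      exfalso
      haveI : IsProbabilityMeasure (μ.toMeasure.toMeasure : Measure X) :=
        ((LevyProkhorov.toMeasureEquiv (α := ProbabilityMeasure X)) μ).prop
      have h1 : (μ.toMeasure.toMeasure : Measure X) Set.univ = 1 := measure_univ
      rw [show (Set.univ : Set X) = ∅ from Set.univ_eq_empty_iff.mpr hX, measure_empty] at h1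
      exact zero_ne_one h1
    · exact forward_dir f hf h
  · exact backward_dir f hf
end

section
/- Let (X,d) be a compact metric space and f_{0,∞} = {f_n}_{n=0}^∞ a sequence of continuous self-maps of X. Then (X, f_{0,∞}) is multi-sensitive if and only if the induced system (𝓜(X), f̂_{0,∞}) is multi-sensitive. -/
open MeasureTheory Filter

/-- Multi-sensitivity: some `δ > 0` works so that for every `ε > 0` and finitely many points,
the sets `N(x_i, ε, δ)` have a common element. -/
def NAMultiSensitive {Y : Type*} [PseudoMetricSpace Y] (f : ℕ → Y → Y) : Prop :=
  ∃ δ : ℝ, 0 < δ ∧ ∀ ε : ℝ, 0 < ε → ∀ k, 1 ≤ k → ∀ x : Fin k → Y,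
    (⋂ i, NASensSet f (x i) ε δ).Nonempty

open Metric Set ENNReal

section helpers

variable {X : Type*} [MetricSpace X] [MeasurableSpace X] [BorelSpace X]

lemma nacomp_continuous (f : ℕ → X → X) (hf : ∀ n, Continuous (f n)) (n : ℕ) :
    Continuous (nacomp f n) := by
  induction n with
  | zero => exact continuous_id
  | succ n ih => exact (hf n).comp ih

/-- package a probability measure as a point of the Lévy-Prokhorov space -/
noncomputable def toLP (μ : Measure X) (h : IsProbabilityMeasure μ) :
    LevyProkhorov (ProbabilityMeasure X) :=
  (LevyProkhorov.toMeasureEquiv (α := ProbabilityMeasure X)).symm ⟨μ, h⟩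

/-- the underlying measure of a point of Lévy-Prokhorov space -/
def tmLP (μ : LevyProkhorov (ProbabilityMeasure X)) : Measure X :=
  ((LevyProkhorov.toMeasureEquiv (α := ProbabilityMeasure X)) μ).toMeasure

@[simp] lemma tmLP_toLP (μ : Measure X) (h : IsProbabilityMeasure μ) : tmLP (toLP μ h) = μ := rfl

instance tmLP_prob (μ : LevyProkhorov (ProbabilityMeasure X)) : IsProbabilityMeasure (tmLP μ) :=
  ((LevyProkhorov.toMeasureEquiv (α := ProbabilityMeasure X)) μ).2

lemma distLP_eq (μ ν : LevyProkhorov (ProbabilityMeasure X)) :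
    dist μ ν = levyProkhorovDist (tmLP μ) (tmLP ν) := rfl

lemma tmLP_inducedMap (g : X → X) (hg : Continuous g) (ν : LevyProkhorov (ProbabilityMeasure X)) :
    tmLP (inducedMap g hg ν) = (tmLP ν).map g :=
  ProbabilityMeasure.toMeasure_map _ hg.measurable.aemeasurable

lemma tmLP_nacomp_induced (f : ℕ → X → X) (hf : ∀ n, Continuous (f n)) (n : ℕ)
    (μ : LevyProkhorov (ProbabilityMeasure X)) :
    tmLP (nacomp (fun m => inducedMap (f m) (hf m)) n μ) = (tmLP μ).map (nacomp f n) := by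
  induction n with
  | zero => simp [nacomp, tmLP, Measure.map_id]
  | succ n ih =>
    show tmLP (inducedMap (f n) (hf n) (nacomp (fun m => inducedMap (f m) (hf m)) n μ)) = _
    rw [tmLP_inducedMap, ih,
      Measure.map_map (hf n).measurable (nacomp_continuous f hf n).measurable]
    rfl

/-- lower bound for LP distance from a witness set -/
lemma lp_dist_ge {μ ν : Measure X} (hμ : IsProbabilityMeasure μ) (hν : IsProbabilityMeasure ν)
    {t : ℝ} (ht : 0 ≤ t) {B : Set X} (hB : MeasurableSet B)
    (h : μ (thickening t B) + ENNReal.ofReal t < ν B) :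
    t ≤ dist (toLP μ hμ) (toLP ν hν) := by
  rw [distLP_eq, tmLP_toLP, tmLP_toLP]
  have hne : levyProkhorovEDist μ ν ≠ ∞ := levyProkhorovEDist_ne_top μ ν
  have key : ENNReal.ofReal t ≤ levyProkhorovEDist μ ν := by
    by_contra hlt
    push_neg at hlt
    have := right_measure_le_of_levyProkhorovEDist_lt hlt hB
    rw [ENNReal.toReal_ofReal ht] at this
    exact absurd this (not_le.mpr h)
  calc t = (ENNReal.ofReal t).toReal := (ENNReal.toReal_ofReal ht).symm
    _ ≤ _ := ENNReal.toReal_mono hne key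

lemma lp_dist_le {μ ν : Measure X} (hμ : IsProbabilityMeasure μ) (hν : IsProbabilityMeasure ν)
    {c : ℝ} (hc : 0 ≤ c)
    (h : ∀ ε (B : Set X), c < ε → MeasurableSet B → μ B ≤ ν (thickening ε B) + ENNReal.ofReal ε) :
    dist (toLP μ hμ) (toLP ν hν) ≤ c := by
  rw [distLP_eq, tmLP_toLP, tmLP_toLP]
  exact levyProkhorovDist_le_of_forall_le μ ν hc h

end helpers

section sdirac

variable {X : Type*} [MetricSpace X] [MeasurableSpace X] [BorelSpace X]

/-- finite weighted sum of Dirac measures -/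
noncomputable def sdirac {r : ℕ} (a : Fin r → ℝ≥0∞) (p : Fin r → X) : Measure X :=
  ∑ j, a j • Measure.dirac (p j)

lemma sdirac_apply {r : ℕ} (a : Fin r → ℝ≥0∞) (p : Fin r → X) (B : Set X) :
    sdirac a p B = ∑ j, Set.indicator B (fun _ => a j) (p j) := by
  rw [sdirac, Measure.coe_finset_sum]
  simp only [Finset.sum_apply]
  congr 1
  ext j
  rw [Measure.smul_apply, Measure.dirac_apply, smul_eq_mul]
  by_cases h : p j ∈ B
  · simp [Set.indicator_of_mem h]
  · simp [Set.indicator_of_notMem h]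

lemma sdirac_map {r : ℕ} (a : Fin r → ℝ≥0∞) (p : Fin r → X) {g : X → X} (hg : Measurable g) :
    (sdirac a p).map g = sdirac a (g ∘ p) := by
  classical
  rw [sdirac, sdirac]
  induction (Finset.univ : Finset (Fin r)) using Finset.induction_on with
  | empty => simp
  | insert _ _ hj ih =>
    rw [Finset.sum_insert hj, Finset.sum_insert hj, Measure.map_add _ _ hg, ih,
      Measure.map_smul, Measure.map_dirac' hg]
    rfl

lemma sdirac_prob {r : ℕ} (a : Fin r → ℝ≥0∞) (p : Fin r → X) (ha : ∑ j, a j = 1) :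
    IsProbabilityMeasure (sdirac a p) := by
  constructor
  rw [sdirac_apply]
  simpa using ha

/-- a finite measurable partition subordinate to balls of radius ε, covering X -/
lemma exists_partition_s17 [CompactSpace X] [Nonempty X] {ε : ℝ} (hε : 0 < ε) :
    ∃ (r : ℕ) (c : Fin r → X) (E : Fin r → Set X), 1 ≤ r ∧
      (∀ j, MeasurableSet (E j)) ∧ Set.univ.PairwiseDisjoint E ∧
      (⋃ j, E j) = Set.univ ∧ ∀ j, E j ⊆ ball (c j) ε := by
  classical
  obtain ⟨t, ht, hcov⟩ := (totallyBounded_iff.mp (isCompact_univ (X := X)).totallyBounded) ε hε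
  obtain ⟨s, rfl⟩ := ht.exists_finset_coe
  set r := s.card with hr
  set c : Fin r → X := fun j => (s.equivFin.symm j : X) with hc
  have hcov' : ∀ x : X, ∃ j : Fin r, x ∈ ball (c j) ε := by
    intro x
    have hx : x ∈ ⋃ y ∈ (s : Set X), ball y ε := hcov (Set.mem_univ x)
    simp only [Set.mem_iUnion] at hx
    obtain ⟨y, hy, hxy⟩ := hx
    refine ⟨s.equivFin ⟨y, hy⟩, ?_⟩
    simpa [hc] using hxy
  set E : Fin r → Set X := fun j =>
    ball (c j) ε \ ⋃ (k : Fin r) (_ : k < j), ball (c k) ε with hE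
  have hmble : ∀ j, MeasurableSet (E j) :=
    fun j => isOpen_ball.measurableSet.diff
      (MeasurableSet.iUnion fun k => MeasurableSet.iUnion fun _ => isOpen_ball.measurableSet)
  have hsub : ∀ j, E j ⊆ ball (c j) ε := fun j => Set.diff_subset
  have hdisj : Set.univ.PairwiseDisjoint E := by
    intro i _ j _ hij
    rcases hij.lt_or_gt with h | h
    · refine Set.disjoint_left.mpr fun x hxi hxj => ?_
      exact hxj.2 (Set.mem_iUnion.mpr ⟨i, Set.mem_iUnion.mpr ⟨h, hxi.1⟩⟩)
    · refine Set.disjoint_left.mpr fun x hxi hxj => ?_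
      exact hxi.2 (Set.mem_iUnion.mpr ⟨j, Set.mem_iUnion.mpr ⟨h, hxj.1⟩⟩)
  have huniv : (⋃ j, E j) = Set.univ := by
    apply Set.eq_univ_of_forall
    intro x
    have hex : ∃ j, x ∈ ball (c j) ε := hcov' x
    refine Set.mem_iUnion.mpr ⟨Fin.find _ hex, Fin.find_spec hex, ?_⟩
    intro hmem
    simp only [Set.mem_iUnion] at hmem
    obtain ⟨k, hk, hxk⟩ := hmem
    exact Fin.find_min hex hk hxk
  have hr1 : 1 ≤ r := by
    rcases Nat.eq_zero_or_pos r with h | h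
    · exfalso
      obtain ⟨x⟩ := ‹Nonempty X›
      have := huniv ▸ Set.mem_univ x
      have hx : x ∈ ⋃ j, E j := by rw [huniv]; trivial
      obtain ⟨j, _⟩ := Set.mem_iUnion.mp hx
      exact absurd j.2 (by omega)
    · exact h
  exact ⟨r, c, E, hr1, hmble, hdisj, huniv, hsub⟩

end sdirac

section approx

variable {X : Type*} [MetricSpace X] [MeasurableSpace X] [BorelSpace X]

lemma partition_sum_one {r : ℕ} {E : Fin r → Set X} (hmble : ∀ j, MeasurableSet (E j))
    (hdisj : Set.univ.PairwiseDisjoint E) (huniv : (⋃ j, E j) = Set.univ)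
    (μ : Measure X) [IsProbabilityMeasure μ] :
    ∑ j, μ (E j) = 1 := by
  have h1 : μ (⋃ j ∈ (Finset.univ : Finset (Fin r)), E j) = ∑ j, μ (E j) :=
    measure_biUnion_finset (by simpa using hdisj) (fun b _ => hmble b)
  rw [← h1, show (⋃ j ∈ (Finset.univ : Finset (Fin r)), E j) = ⋃ j, E j by simp, huniv]
  exact measure_univ

lemma approx_le {r : ℕ} {c : Fin r → X} {E : Fin r → Set X} {ε' : ℝ}
    (hmble : ∀ j, MeasurableSet (E j)) (hdisj : Set.univ.PairwiseDisjoint E)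
    (huniv : (⋃ j, E j) = Set.univ) (hsub : ∀ j, E j ⊆ ball (c j) ε')
    (μ : Measure X) [IsProbabilityMeasure μ] :
    ∀ ε (B : Set X), ε' < ε → MeasurableSet B →
      μ B ≤ (sdirac (fun j => μ (E j)) c) (thickening ε B) + ENNReal.ofReal ε := by
  intro ε B hε hB
  have hBeq : B = ⋃ j ∈ (Finset.univ : Finset (Fin r)), (B ∩ E j) := by
    rw [show (⋃ j ∈ (Finset.univ : Finset (Fin r)), (B ∩ E j)) = ⋃ j, (B ∩ E j) by simp,
      ← Set.inter_iUnion, huniv, Set.inter_univ]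
  have hμB : μ B = ∑ j, μ (B ∩ E j) := by
    conv_lhs => rw [hBeq]
    exact measure_biUnion_finset
      (fun i _ j _ hij => ((hdisj (Set.mem_univ i) (Set.mem_univ j) hij).mono
        Set.inter_subset_right Set.inter_subset_right))
      (fun b _ => hB.inter (hmble b))
  rw [hμB, sdirac_apply]
  refine le_trans (Finset.sum_le_sum fun j _ => ?_) le_self_add
  rcases (B ∩ E j).eq_empty_or_nonempty with h | ⟨z, hzB, hzE⟩
  · simp [h]
  · have hmem : c j ∈ thickening ε B := by
      rw [mem_thickening_iff]
      refine ⟨z, hzB, ?_⟩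
      have := hsub j hzE
      rw [mem_ball] at this
      rw [dist_comm]
      exact this.trans hε
    rw [Set.indicator_of_mem hmem]
    exact measure_mono Set.inter_subset_right

lemma approx_dist {r : ℕ} {c : Fin r → X} {E : Fin r → Set X} {ε' : ℝ} (hε' : 0 ≤ ε')
    (hmble : ∀ j, MeasurableSet (E j)) (hdisj : Set.univ.PairwiseDisjoint E)
    (huniv : (⋃ j, E j) = Set.univ) (hsub : ∀ j, E j ⊆ ball (c j) ε')
    (μ : Measure X) (hμ : IsProbabilityMeasure μ) :
    dist (toLP μ hμ) (toLP (sdirac (fun j => μ (E j)) c)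
      (sdirac_prob _ _ (partition_sum_one hmble hdisj huniv μ))) ≤ ε' := by
  have := sdirac_prob (fun j => μ (E j)) c (partition_sum_one hmble hdisj huniv μ)
  exact lp_dist_le hμ _ hε' (approx_le hmble hdisj huniv hsub μ)

lemma move_dist {r : ℕ} {a : Fin r → ℝ≥0∞} {p q : Fin r → X} {ρ : ℝ} (hρ : 0 ≤ ρ)
    (hpq : ∀ j, dist (p j) (q j) ≤ ρ)
    (hp : IsProbabilityMeasure (sdirac a p)) (hq : IsProbabilityMeasure (sdirac a q)) :
    dist (toLP (sdirac a p) hp) (toLP (sdirac a q) hq) ≤ ρ := by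
  refine lp_dist_le hp hq hρ fun ε B hε hB => ?_
  rw [sdirac_apply, sdirac_apply]
  refine le_trans (Finset.sum_le_sum fun j _ => ?_) le_self_add
  rcases Set.indicator_eq_zero_or_self B (fun _ => a j) (p j) with h | h
  · simp [h]
  · by_cases hmem : p j ∈ B
    · have : q j ∈ thickening ε B := by
        rw [mem_thickening_iff]
        exact ⟨p j, hmem, lt_of_le_of_lt (by rw [dist_comm]; exact hpq j) hε⟩
      rw [Set.indicator_of_mem hmem, Set.indicator_of_mem this]
    · simp [Set.indicator_of_notMem hmem]

end approx

section separation

variable {X : Type*} [MetricSpace X] [MeasurableSpace X] [BorelSpace X]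

/-- the sensitivity constant for the induced system, given constant `δ` for the base and a
`δ/8`-net of size `K` -/
noncomputable def sepConst (δ : ℝ) (K : ℕ) : ℝ :=
  min (δ/(4*(4*(K:ℝ)*K))) (1/(4*(4*(K:ℝ)*K)))

lemma sepConst_pos {δ : ℝ} (hδ : 0 < δ) {K : ℕ} (hK : 1 ≤ K) : 0 < sepConst δ K := by
  have hK' : (1:ℝ) ≤ (K:ℝ) := by exact_mod_cast hK
  have h4 : (0:ℝ) < 4*(4*(K:ℝ)*K) := by nlinarith
  exact lt_min (div_pos hδ h4) (div_pos one_pos h4)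

lemma separation {δ : ℝ} (hδ : 0 < δ) {K : ℕ} (hK : 1 ≤ K) (nc : Fin K → X)
    (hnet : ∀ x : X, ∃ i, dist x (nc i) < δ/8)
    {r : ℕ} (a : Fin r → ℝ≥0∞) (ha : ∑ j, a j = 1) (u v : Fin r → X)
    (hd : ∀ j, δ < dist (u j) (v j)) :
    ∃ S : Finset (Fin r),
      sepConst δ K ≤
        dist (toLP (sdirac a u) (sdirac_prob a u ha))
             (toLP (sdirac a (fun j => if j ∈ S then v j else u j))
                   (sdirac_prob a _ ha)) := by
  classical
  set M : ℕ := 4*K*K with hMdef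
  have hK' : (1:ℝ) ≤ (K:ℝ) := by exact_mod_cast hK
  have hM1 : 1 ≤ M := by
    calc 1 = 1*1*1 := by norm_num
      _ ≤ 4*K*K := Nat.mul_le_mul (Nat.mul_le_mul (by norm_num) hK) hK
  have hMR : (M:ℝ) = 4*(K:ℝ)*K := by rw [hMdef]; push_cast; ring
  have hMpos : (0:ℝ) < (M:ℝ) := by rw [hMR]; nlinarith
  set τ : ℝ≥0∞ := ENNReal.ofReal (1/(M:ℝ)) with hτdef
  set γ : ℝ := δ/(4*(M:ℝ)) with hγdef
  have hγpos : 0 < γ := div_pos hδ (by nlinarith)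
  set t : ℝ := sepConst δ K with htdef
  have ht_eq : t = min γ (1/(4*(M:ℝ))) := by
    rw [htdef, sepConst, hγdef, hMR]
  have ht_pos : 0 < t := sepConst_pos hδ hK
  -- choice of net index
  have hκ : ∀ x : X, dist x (nc (hnet x).choose) < δ/8 := fun x => (hnet x).choose_spec
  set κ : X → Fin K := fun x => (hnet x).choose with hκdef
  set cl : Fin r → Fin K × Fin K := fun j => (κ (u j), κ (v j)) with hcldef
  set W : Fin K × Fin K → ℝ≥0∞ :=
    fun pq => ∑ j ∈ Finset.univ.filter (fun j => cl j = pq), a j with hWdef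
  have hWsum : ∑ pq, W pq = 1 := by
    rw [hWdef]
    rw [Finset.sum_fiberwise Finset.univ cl a]
    exact ha
  -- heavy class
  have heavy : ∃ pq, 2*τ ≤ W pq := by
    by_contra hcon
    push_neg at hcon
    have hle : ∑ pq, W pq ≤ (Finset.univ : Finset (Fin K × Fin K)).card • (2*τ) :=
      Finset.sum_le_card_nsmul _ _ _ (fun pq _ => (hcon pq).le)
    rw [hWsum, Finset.card_univ, Fintype.card_prod, Fintype.card_fin, nsmul_eq_mul] at hle
    have h2τ : 2*τ = ENNReal.ofReal (2*(1/(M:ℝ))) := by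
      rw [hτdef, ENNReal.ofReal_mul (by norm_num : (0:ℝ) ≤ 2)]
      norm_num
    have hcast : ((K*K : ℕ) : ℝ≥0∞) = ENNReal.ofReal ((K*K : ℕ) : ℝ) :=
      (ENNReal.ofReal_natCast _).symm
    rw [h2τ, hcast, ← ENNReal.ofReal_mul (by positivity)] at hle
    have hhalf : ((K*K : ℕ) : ℝ) * (2*(1/(M:ℝ))) = 1/2 := by
      rw [hMR]
      push_cast
      field_simp
      ring
    rw [hhalf] at hle
    have := ENNReal.one_le_ofReal.mp hle
    linarith
  obtain ⟨pq, hheavy⟩ := heavy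
  set S : Finset (Fin r) := Finset.univ.filter (fun j => cl j = pq) with hSdef
  set Bc : X := nc pq.2 with hBcdef
  -- geometry of the heavy class
  have hvS : ∀ j ∈ S, dist (v j) Bc < δ/8 := by
    intro j hj
    rw [hSdef, Finset.mem_filter] at hj
    have : κ (v j) = pq.2 := by rw [← hj.2]
    rw [hBcdef, ← this]
    exact hκ (v j)
  have huS : ∀ j ∈ S, 7*δ/8 < dist (u j) Bc := by
    intro j hj
    have h1 := hd j
    have h2 := hvS j hj
    have h3 : dist (u j) (v j) ≤ dist (u j) Bc + dist (v j) Bc := dist_triangle_right _ _ _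
    linarith
  -- the measure of growing balls
  set m : Measure X := sdirac a u with hmdef
  haveI hm_prob : IsProbabilityMeasure m := sdirac_prob a u ha
  set F : ℕ → ℝ≥0∞ := fun k => m (ball Bc (δ/8 + (k:ℝ)*γ)) with hFdef
  -- annulus pigeonhole
  have annulus : ∃ k < M, F (k+1) ≤ F k + τ := by
    by_contra hcon
    push_neg at hcon
    have claim : ∀ k, k ≤ M → ENNReal.ofReal ((k:ℝ)/(M:ℝ)) ≤ F k := by
      intro k
      induction k with
      | zero => intro _; simp
      | succ k ih =>
        intro hk
        have hkM : k < M := by omega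
        have h1 := hcon k hkM
        have h2 := ih (by omega)
        have h3 : ENNReal.ofReal (((k:ℝ)+1)/(M:ℝ)) = ENNReal.ofReal ((k:ℝ)/(M:ℝ)) + τ := by
          rw [hτdef, ← ENNReal.ofReal_add (by positivity) (by positivity)]
          congr 1
          field_simp
        push_cast
        rw [h3]
        exact le_of_lt (lt_of_le_of_lt (add_le_add_left h2 τ) h1)
    have hlast : (1:ℝ≥0∞) < F M := by
      have h1 := hcon (M-1) (by omega)
      have h2 := claim (M-1) (by omega)
      have h3 : M - 1 + 1 = M := by omega
      rw [h3] at h1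
      have h4 : ENNReal.ofReal (((M-1:ℕ):ℝ)/(M:ℝ)) + τ = 1 := by
        rw [hτdef, ← ENNReal.ofReal_add (by positivity) (by positivity)]
        have : ((M-1:ℕ):ℝ)/(M:ℝ) + 1/(M:ℝ) = 1 := by
          have : ((M-1:ℕ):ℝ) = (M:ℝ) - 1 := by
            push_cast [Nat.cast_sub hM1]
            ring
          rw [this]
          field_simp
          ring
        rw [this, ENNReal.ofReal_one]
      calc (1:ℝ≥0∞) = ENNReal.ofReal (((M-1:ℕ):ℝ)/(M:ℝ)) + τ := h4.symm
        _ ≤ F (M-1) + τ := add_le_add_left h2 τ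
        _ < F M := h1
    exact absurd hlast (not_lt.mpr prob_le_one)
  obtain ⟨k, hkM, hFk⟩ := annulus
  set R : ℝ := δ/8 + (k:ℝ)*γ with hRdef
  set B : Set X := ball Bc R with hBdef
  have hkγ : (k:ℝ)*γ ≤ (M:ℝ)*γ := by
    apply mul_le_mul_of_nonneg_right _ hγpos.le
    exact_mod_cast hkM.le
  have hMγ : (M:ℝ)*γ = δ/4 := by
    rw [hγdef]
    field_simp
  have hR38 : R ≤ 3*δ/8 := by rw [hRdef]; linarith [hMγ ▸ hkγ]
  have hR8 : δ/8 ≤ R := by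
    rw [hRdef]
    have : 0 ≤ (k:ℝ)*γ := by positivity
    linarith
  -- the moved measure
  set w : Fin r → X := fun j => if j ∈ S then v j else u j with hwdef
  set ν : Measure X := sdirac a w with hνdef
  haveI hν_prob : IsProbabilityMeasure ν := sdirac_prob a w ha
  -- claim 1 : ν B = W pq + m B  and  2τ + m B ≤ ν B
  have hmB : m B = ∑ j ∈ Sᶜ, Set.indicator B (fun _ => a j) (u j) := by
    rw [hmdef, sdirac_apply, ← Finset.sum_add_sum_compl S]
    have hzero : ∑ j ∈ S, Set.indicator B (fun _ => a j) (u j) = 0 := by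
      apply Finset.sum_eq_zero
      intro j hj
      apply Set.indicator_of_notMem
      rw [hBdef, mem_ball]
      push_neg
      calc R ≤ 3*δ/8 := hR38
        _ ≤ 7*δ/8 := by linarith
        _ ≤ dist (u j) Bc := (huS j hj).le
    rw [hzero, zero_add]
  have hνB : ν B = W pq + ∑ j ∈ Sᶜ, Set.indicator B (fun _ => a j) (u j) := by
    have h1 : ∑ j ∈ S, Set.indicator B (fun _ => a j) (w j) = W pq := by
      have heq : ∀ j ∈ S, Set.indicator B (fun _ => a j) (w j) = a j := by
        intro j hj
        rw [hwdef]
        simp only [hj, if_true]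
        exact Set.indicator_of_mem
          (by rw [hBdef, mem_ball]; exact lt_of_lt_of_le (hvS j hj) hR8) _
      rw [Finset.sum_congr rfl heq]
    have h2 : ∑ j ∈ Sᶜ, Set.indicator B (fun _ => a j) (w j)
        = ∑ j ∈ Sᶜ, Set.indicator B (fun _ => a j) (u j) := by
      apply Finset.sum_congr rfl
      intro j hj
      rw [Finset.mem_compl] at hj
      rw [hwdef]
      simp only [hj, if_false]
    rw [hνdef, sdirac_apply, ← Finset.sum_add_sum_compl S, h1, h2]
  have hclaim1 : 2*τ + m B ≤ ν B := by
    rw [hνB, hmB]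
    exact add_le_add_left hheavy _
  -- claim 2 : thickening
  have hthick : m (thickening t B) ≤ F k + τ := by
    have hsub : thickening t B ⊆ ball Bc (δ/8 + ((k:ℝ)+1)*γ) := by
      intro z hz
      rw [mem_thickening_iff] at hz
      obtain ⟨y, hyB, hzy⟩ := hz
      rw [hBdef, mem_ball] at hyB
      rw [mem_ball]
      have htγ : t ≤ γ := ht_eq ▸ min_le_left _ _
      calc dist z Bc ≤ dist z y + dist y Bc := dist_triangle _ _ _
        _ < t + R := by linarith
        _ ≤ γ + R := by linarith
        _ = δ/8 + ((k:ℝ)+1)*γ := by rw [hRdef]; ring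
    have hcast : δ/8 + ((k:ℝ)+1)*γ = δ/8 + (((k+1:ℕ)):ℝ)*γ := by push_cast; ring
    have h1 : m (thickening t B) ≤ F (k+1) := by
      refine le_trans (measure_mono hsub) (le_of_eq ?_)
      rw [hcast, hFdef]
    exact le_trans h1 hFk
  have hFkB : F k = m B := rfl
  -- final strict inequality
  have hofReal_t : ENNReal.ofReal t < τ := by
    rw [hτdef]
    apply ENNReal.ofReal_lt_ofReal_iff (by positivity) |>.mpr
    calc t ≤ 1/(4*(M:ℝ)) := ht_eq ▸ min_le_right _ _
      _ < 1/(M:ℝ) := by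
        apply div_lt_div_of_pos_left one_pos hMpos
        linarith
  have hfin : m B + τ ≠ ∞ := by
    apply ENNReal.add_ne_top.mpr
    exact ⟨measure_ne_top m B, ENNReal.ofReal_ne_top⟩
  have hmain : m (thickening t B) + ENNReal.ofReal t < ν B := by
    calc m (thickening t B) + ENNReal.ofReal t
        ≤ (F k + τ) + ENNReal.ofReal t := add_le_add_left hthick _
      _ = (m B + τ) + ENNReal.ofReal t := by rw [hFkB]
      _ < (m B + τ) + τ := ENNReal.add_lt_add_left hfin hofReal_t
      _ = 2*τ + m B := by ring
      _ ≤ ν B := hclaim1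
  refine ⟨S, ?_⟩
  have := lp_dist_ge (sdirac_prob a u ha) (sdirac_prob a w ha) ht_pos.le
    (isOpen_ball.measurableSet (s := B)) hmain
  exact this
end separation

section backward

variable {X : Type*} [MetricSpace X] [MeasurableSpace X] [BorelSpace X]

/-- Dirac measure as a point of Lévy-Prokhorov space -/
noncomputable def diracLP (x : X) : LevyProkhorov (ProbabilityMeasure X) :=
  toLP (Measure.dirac x) inferInstance

@[simp] lemma tmLP_diracLP (x : X) : tmLP (diracLP x) = Measure.dirac x := rfl

lemma distLP_congr {μ₁ μ₂ ν₁ ν₂ : LevyProkhorov (ProbabilityMeasure X)}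
    (h1 : tmLP μ₁ = tmLP μ₂) (h2 : tmLP ν₁ = tmLP ν₂) : dist μ₁ ν₁ = dist μ₂ ν₂ := by
  rw [distLP_eq, distLP_eq, h1, h2]

lemma distLP_toReal (μ ν : LevyProkhorov (ProbabilityMeasure X)) :
    dist μ ν = (levyProkhorovEDist (tmLP μ) (tmLP ν)).toReal := rfl

lemma near_dirac {x : X} {ν : LevyProkhorov (ProbabilityMeasure X)} {ε : ℝ} (hε : 0 < ε)
    (h : dist (diracLP x) ν < ε) : 1 ≤ tmLP ν (ball x ε) + ENNReal.ofReal ε := by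
  have hne : levyProkhorovEDist (Measure.dirac x) (tmLP ν) ≠ ∞ :=
    levyProkhorovEDist_ne_top _ _
  have hedist : levyProkhorovEDist (Measure.dirac x) (tmLP ν) < ENNReal.ofReal ε := by
    rw [distLP_toReal] at h
    exact (ENNReal.lt_ofReal_iff_toReal_lt hne).mpr (by simpa using h)
  have hkey := left_measure_le_of_levyProkhorovEDist_lt hedist (measurableSet_singleton x)
  rw [ENNReal.toReal_ofReal hε.le, thickening_singleton] at hkey
  have h1 : Measure.dirac x {x} = 1 := by
    rw [Measure.dirac_apply, Set.indicator_of_mem (Set.mem_singleton x)]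
    rfl
  rw [h1] at hkey
  exact hkey

lemma far_dirac {z : X} {ρ : LevyProkhorov (ProbabilityMeasure X)} {δ : ℝ} (hδ : 0 < δ)
    (h : δ < dist (diracLP z) ρ) : ENNReal.ofReal δ ≤ tmLP ρ ((ball z δ)ᶜ) := by
  by_contra hcon
  push_neg at hcon
  refine absurd h (not_lt.mpr ?_)
  rw [distLP_toReal, tmLP_diracLP]
  have hedist : levyProkhorovEDist (Measure.dirac z) (tmLP ρ) ≤ ENNReal.ofReal δ := by
    apply levyProkhorovEDist_le_of_forall_le
    intro ε B hε hεtop hB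
    by_cases hz : z ∈ B
    · have hδε : δ < ε.toReal := (ENNReal.ofReal_lt_iff_lt_toReal hδ.le hεtop.ne).mp hε
      have hball : ball z δ ⊆ thickening ε.toReal B := by
        intro y hy
        rw [mem_thickening_iff]
        exact ⟨z, hz, lt_trans (mem_ball.mp hy) hδε⟩
      calc Measure.dirac z B ≤ 1 := prob_le_one
        _ = tmLP ρ (ball z δ) + tmLP ρ ((ball z δ)ᶜ) := by
            rw [measure_add_measure_compl isOpen_ball.measurableSet, measure_univ]
        _ ≤ tmLP ρ (thickening ε.toReal B) + ε :=
            add_le_add (measure_mono hball) (hcon.le.trans hε.le)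
    · rw [Measure.dirac_apply, Set.indicator_of_notMem hz]
      exact zero_le
  calc (levyProkhorovEDist (Measure.dirac z) (tmLP ρ)).toReal
      ≤ (ENNReal.ofReal δ).toReal := ENNReal.toReal_mono ENNReal.ofReal_ne_top hedist
    _ = δ := ENNReal.toReal_ofReal hδ.le

end backward


/-- `(X, f_{0,∞})` is multi-sensitive iff the induced system `(𝓜(X), f̂_{0,∞})` is
multi-sensitive. -/
theorem multiSensitive_iff_induced
    {X : Type*} [MetricSpace X] [CompactSpace X] [MeasurableSpace X] [BorelSpace X]
    (f : ℕ → X → X) (hf : ∀ n, Continuous (f n)) :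
    NAMultiSensitive f ↔ NAMultiSensitive (fun n => inducedMap (f n) (hf n)) := by
  constructor
  · -- forward direction
    rintro ⟨δ, hδ, hsens⟩
    rcases isEmpty_or_nonempty X with hX | hX
    · refine ⟨1, one_pos, fun ε hε k hk μs => ?_⟩
      exfalso
      set P := (LevyProkhorov.toMeasureEquiv (α := ProbabilityMeasure X)) (μs ⟨0, hk⟩)
      have h1 : P.toMeasure Set.univ = 1 := measure_univ
      rw [Set.univ_eq_empty_iff.mpr hX] at h1
      simp at h1
    · obtain ⟨K, nc, EK, hK1, _, _, hEKu, hEKs⟩ :=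
        exists_partition_s17 (X := X) (show (0:ℝ) < δ/8 by positivity)
      have hnet : ∀ x : X, ∃ i, dist x (nc i) < δ/8 := by
        intro x
        have hx : x ∈ ⋃ j, EK j := by rw [hEKu]; trivial
        obtain ⟨j, hj⟩ := Set.mem_iUnion.mp hx
        exact ⟨j, mem_ball.mp (hEKs j hj)⟩
      refine ⟨sepConst δ K / 3, div_pos (sepConst_pos hδ hK1) (by norm_num),
        fun ε hε k hk μs => ?_⟩
      obtain ⟨r, c, E, hr1, hEm, hEd, hEu, hEs⟩ :=
        exists_partition_s17 (X := X) (show (0:ℝ) < ε/3 by positivity)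
      obtain ⟨n, hn⟩ := hsens (ε/3) (by positivity) r hr1 c
      rw [Set.mem_iInter] at hn
      have hn1 : 1 ≤ n := (hn ⟨0, hr1⟩).1
      choose y hy1 hy2 using fun j => (hn j).2
      have hgc : Continuous (nacomp f n) := nacomp_continuous f hf n
      refine ⟨n, Set.mem_iInter.mpr fun i => ?_⟩
      set μ : LevyProkhorov (ProbabilityMeasure X) := μs i with hμ
      set a : Fin r → ℝ≥0∞ := fun j => tmLP μ (E j) with hadef
      have ha : ∑ j, a j = 1 := partition_sum_one hEm hEd hEu (tmLP μ)
      have hm : IsProbabilityMeasure (sdirac a c) := sdirac_prob a c ha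
      obtain ⟨S, hS⟩ := separation hδ hK1 nc hnet a ha
        (fun j => nacomp f n (c j)) (fun j => nacomp f n (y j)) (fun j => hy2 j)
      set q : Fin r → X := fun j => if j ∈ S then y j else c j with hq
      have hνm : IsProbabilityMeasure (sdirac a q) := sdirac_prob a q ha
      have hd1 : dist μ (toLP (sdirac a c) hm) ≤ ε/3 := by
        have := approx_dist (show (0:ℝ) ≤ ε/3 by positivity) hEm hEd hEu hEs
          (tmLP μ) (tmLP_prob μ)
        exact this
      have hmove : dist (toLP (sdirac a c) hm) (toLP (sdirac a q) hνm) ≤ ε/3 := by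
        refine move_dist (by positivity) (fun j => ?_) hm hνm
        rw [hq]
        by_cases hj : j ∈ S
        · simp only [hj, if_true]
          exact (hy1 j).le
        · simp only [hj, if_false, dist_self]
          positivity
      have him : tmLP (nacomp (fun m => inducedMap (f m) (hf m)) n (toLP (sdirac a c) hm))
          = sdirac a (fun j => nacomp f n (c j)) := by
        rw [tmLP_nacomp_induced, tmLP_toLP, sdirac_map a c hgc.measurable]
        rfl
      have hiν : tmLP (nacomp (fun m => inducedMap (f m) (hf m)) n (toLP (sdirac a q) hνm))
          = sdirac a (fun j => if j ∈ S then nacomp f n (y j) else nacomp f n (c j)) := by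
        rw [tmLP_nacomp_induced, tmLP_toLP, sdirac_map a q hgc.measurable]
        congr 1
        funext j
        rw [hq]
        by_cases hj : j ∈ S <;> simp [hj, Function.comp]
      have hdist_eq : dist (nacomp (fun m => inducedMap (f m) (hf m)) n (toLP (sdirac a c) hm))
            (nacomp (fun m => inducedMap (f m) (hf m)) n (toLP (sdirac a q) hνm))
          = dist (toLP (sdirac a (fun j => nacomp f n (c j))) (sdirac_prob _ _ ha))
              (toLP (sdirac a (fun j => if j ∈ S then nacomp f n (y j) else nacomp f n (c j)))
                (sdirac_prob _ _ ha)) :=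
        distLP_congr (him.trans (tmLP_toLP _ _).symm) (hiν.trans (tmLP_toLP _ _).symm)
      have hkey : sepConst δ K ≤
          dist (nacomp (fun m => inducedMap (f m) (hf m)) n (toLP (sdirac a c) hm))
            (nacomp (fun m => inducedMap (f m) (hf m)) n (toLP (sdirac a q) hνm)) := by
        rw [hdist_eq]
        exact hS
      have hsep_pos := sepConst_pos hδ hK1
      have htri : sepConst δ K ≤
          dist (nacomp (fun m => inducedMap (f m) (hf m)) n μ)
            (nacomp (fun m => inducedMap (f m) (hf m)) n (toLP (sdirac a c) hm)) +
          dist (nacomp (fun m => inducedMap (f m) (hf m)) n μ)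
            (nacomp (fun m => inducedMap (f m) (hf m)) n (toLP (sdirac a q) hνm)) := by
        refine le_trans hkey (le_trans (dist_triangle _
          (nacomp (fun m => inducedMap (f m) (hf m)) n μ) _) ?_)
        rw [dist_comm]
      rcases le_or_gt
        (dist (nacomp (fun m => inducedMap (f m) (hf m)) n μ)
          (nacomp (fun m => inducedMap (f m) (hf m)) n (toLP (sdirac a c) hm)))
        (sepConst δ K / 3) with hcase | hcase
      · refine ⟨hn1, toLP (sdirac a q) hνm, ?_, ?_⟩
        · calc dist μ (toLP (sdirac a q) hνm)
              ≤ dist μ (toLP (sdirac a c) hm) + dist (toLP (sdirac a c) hm)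
                  (toLP (sdirac a q) hνm) := dist_triangle _ _ _
            _ ≤ ε/3 + ε/3 := add_le_add hd1 hmove
            _ < ε := by linarith
        · linarith
      · exact ⟨hn1, toLP (sdirac a c) hm, lt_of_le_of_lt hd1 (by linarith), hcase⟩
  · -- backward direction
    rintro ⟨δ, hδ, hsens⟩
    refine ⟨δ/2, by positivity, fun ε hε k hk xs => ?_⟩
    set ε₀ : ℝ := min (ε/2) (δ/2) with hε₀def
    have hε₀pos : 0 < ε₀ := lt_min (by positivity) (by positivity)
    obtain ⟨n, hn⟩ := hsens ε₀ hε₀pos k hk (fun i => diracLP (xs i))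
    rw [Set.mem_iInter] at hn
    refine ⟨n, Set.mem_iInter.mpr fun i => ?_⟩
    obtain ⟨hn1, ν, hν1, hν2⟩ := hn i
    have hgc : Continuous (nacomp f n) := nacomp_continuous f hf n
    set x : X := xs i with hx
    have himg : tmLP (nacomp (fun m => inducedMap (f m) (hf m)) n (diracLP x))
        = Measure.dirac (nacomp f n x) := by
      rw [tmLP_nacomp_induced, tmLP_diracLP, Measure.map_dirac' hgc.measurable]
    have hν2' : δ < dist (diracLP (nacomp f n x))
        (nacomp (fun m => inducedMap (f m) (hf m)) n ν) := by
      rw [← distLP_congr (himg.trans (tmLP_diracLP _).symm)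
        (rfl : tmLP (nacomp (fun m => inducedMap (f m) (hf m)) n ν) = _)]
      exact hν2
    have hfar := far_dirac hδ hν2'
    rw [tmLP_nacomp_induced f hf n ν,
      Measure.map_apply hgc.measurable isOpen_ball.measurableSet.compl] at hfar
    have hnear := near_dirac hε₀pos hν1
    have hex : ∃ z, z ∈ ball x ε₀ ∧ z ∈ nacomp f n ⁻¹' (ball (nacomp f n x) δ)ᶜ := by
      by_contra hno
      push_neg at hno
      have hsub : nacomp f n ⁻¹' (ball (nacomp f n x) δ)ᶜ ⊆ (ball x ε₀)ᶜ := by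
        intro z hz
        simp only [Set.mem_compl_iff]
        intro hball
        exact hno z hball hz
      have h1 : ENNReal.ofReal δ ≤ tmLP ν ((ball x ε₀)ᶜ) :=
        le_trans hfar (measure_mono hsub)
      have h2 : tmLP ν ((ball x ε₀)ᶜ) ≤ ENNReal.ofReal ε₀ := by
        rw [prob_compl_eq_one_sub isOpen_ball.measurableSet]
        exact tsub_le_iff_right.mpr (by rw [add_comm]; exact hnear)
      have hδε : δ ≤ ε₀ := (ENNReal.ofReal_le_ofReal_iff hε₀pos.le).mp (h1.trans h2)
      have : ε₀ ≤ δ/2 := min_le_right _ _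
      linarith
    obtain ⟨z, hz1, hz2⟩ := hex
    refine ⟨hn1, z, ?_, ?_⟩
    · calc dist x z = dist z x := dist_comm _ _
        _ < ε₀ := mem_ball.mp hz1
        _ ≤ ε/2 := min_le_left _ _
        _ < ε := by linarith
    · have h3 : δ ≤ dist (nacomp f n z) (nacomp f n x) :=
        not_lt.mp (fun hcon => hz2 (mem_ball.mpr hcon))
      calc δ/2 < δ := by linarith
        _ ≤ dist (nacomp f n z) (nacomp f n x) := h3
        _ = dist (nacomp f n x) (nacomp f n z) := dist_comm _ _
end
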